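/- Let w ∈ ℝ^{2n} and let α : ℝ → ℝ be continuously differentiable. Then the map φ(x) = x + h·α'(wᵀx)·Jw is symplectic, i.e., its Jacobian satisfies (Dφ)ᵀ J (Dφ) = J everywhere. -/

import Mathlib

open Matrix

variable {n : ℕ}

lemma mul_vecMulVec' {m k l : Type*} [Fintype k] (M : Matrix m k ℝ) (a : k → ℝ) (b : l → ℝ) :
    M * vecMulVec a b = vecMulVec (M *ᵥ a) b := by
  ext i j
  simp [mul_apply, vecMulVec_apply, mulVec, dotProduct, Finset.sum_mul, mul_assoc]

lemma vecMulVec_mul' {m k l : Type*} [Fintype k] (a : m → ℝ) (b : k → ℝ) (M : Matrix k l ℝ) :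
    vecMulVec a b * M = vecMulVec a (b ᵥ* M) := by
  ext i j
  simp [mul_apply, vecMulVec_apply, vecMul, dotProduct, Finset.mul_sum, mul_assoc]

lemma vecMulVec_transpose' {m k : Type*} (a : m → ℝ) (b : k → ℝ) :
    (vecMulVec a b)ᵀ = vecMulVec b a := by
  ext i j; simp [vecMulVec_apply, mul_comm]

lemma vecMul_vecMulVec' {m k : Type*} [Fintype m] (b a : m → ℝ) (d : k → ℝ) :
    b ᵥ* vecMulVec a d = (b ⬝ᵥ a) • d := by
  ext j
  simp [vecMul, vecMulVec_apply, dotProduct, Finset.sum_mul, mul_assoc]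

lemma vecMulVec_neg' {m k : Type*} (a : m → ℝ) (b : k → ℝ) :
    vecMulVec (-a) b = -vecMulVec a b := by
  ext i j; simp [vecMulVec_apply]

lemma vecMulVec_mulVec' {m k : Type*} [Fintype k] (a : m → ℝ) (b c : k → ℝ) :
    vecMulVec a b *ᵥ c = (b ⬝ᵥ c) • a := by
  ext i
  simp [mulVec, vecMulVec_apply, dotProduct, Finset.mul_sum, mul_assoc, mul_comm, mul_left_comm]

lemma vecMulVec_zero_left' {m k : Type*} (b : k → ℝ) :
    vecMulVec (0 : m → ℝ) b = 0 := by ext i j; simp [vecMulVec_apply]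

lemma wJw (w : Fin n ⊕ Fin n → ℝ) : w ⬝ᵥ (J (Fin n) ℝ *ᵥ w) = 0 := by
  have h2 : w ᵥ* J (Fin n) ℝ = -(J (Fin n) ℝ *ᵥ w) := by
    rw [← mulVec_transpose, J_transpose, neg_mulVec]
  have h3 : w ⬝ᵥ (J (Fin n) ℝ *ᵥ w) = -(w ⬝ᵥ (J (Fin n) ℝ *ᵥ w)) := by
    conv_lhs => rw [dotProduct_mulVec, h2, neg_dotProduct, dotProduct_comm]
  linarith

lemma key_matrix (w : Fin n ⊕ Fin n → ℝ) (c : ℝ) :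
    (1 + c • vecMulVec (J (Fin n) ℝ *ᵥ w) w)ᵀ * J (Fin n) ℝ *
      (1 + c • vecMulVec (J (Fin n) ℝ *ᵥ w) w) = J (Fin n) ℝ := by
  set Jm := J (Fin n) ℝ
  set u := Jm *ᵥ w with hu
  have hJu : Jm *ᵥ u = -w := by
    rw [hu, mulVec_mulVec, J_squared]
    show (-(1 : Matrix _ _ ℝ)) *ᵥ w = -w
    rw [neg_mulVec, one_mulVec]
  have huJ : u ᵥ* Jm = w := by
    rw [← mulVec_transpose, show Jmᵀ = -Jm from J_transpose _ _, neg_mulVec, hJu, neg_neg]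
  have hwu : w ⬝ᵥ u = 0 := wJw w
  rw [transpose_add, transpose_one, transpose_smul, vecMulVec_transpose']
  simp only [add_mul, mul_add, one_mul, mul_one, smul_mul_assoc, mul_smul_comm,
    vecMulVec_mul', mul_vecMulVec', huJ, hJu, vecMul_vecMulVec', hwu, zero_smul,
    vecMulVec_neg', smul_neg, vecMulVec_mulVec', vecMulVec_zero_left', smul_zero]
  module

/-- Let `w ∈ ℝ^{2n}` and `α : ℝ → ℝ` be (twice) continuously
differentiable.  Then the ridge-shear map `φ(x) = x + h α'(wᵀx) Jw` is
symplectic: its Jacobian `Dφ(x)` satisfies `(Dφ)ᵀ J (Dφ) = J` everywhere. -/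
theorem ridge_shear_symplectic (n : ℕ) (h : ℝ) (w : Fin n ⊕ Fin n → ℝ)
    (α : ℝ → ℝ) (hα : ContDiff ℝ 2 α)
    (φ : (Fin n ⊕ Fin n → ℝ) → Fin n ⊕ Fin n → ℝ)
    (hφ : ∀ x, φ x = x + (h * deriv α (w ⬝ᵥ x)) • (Matrix.J (Fin n) ℝ *ᵥ w)) :
    ∀ x, (LinearMap.toMatrix' ((fderiv ℝ φ x : (Fin n ⊕ Fin n → ℝ) →L[ℝ] Fin n ⊕ Fin n → ℝ) :
            (Fin n ⊕ Fin n → ℝ) →ₗ[ℝ] Fin n ⊕ Fin n → ℝ))ᵀ * Matrix.J (Fin n) ℝ *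
          (LinearMap.toMatrix' ((fderiv ℝ φ x : (Fin n ⊕ Fin n → ℝ) →L[ℝ] Fin n ⊕ Fin n → ℝ) :
            (Fin n ⊕ Fin n → ℝ) →ₗ[ℝ] Fin n ⊕ Fin n → ℝ)) = Matrix.J (Fin n) ℝ := by
  intro x
  set u : Fin n ⊕ Fin n → ℝ := Matrix.J (Fin n) ℝ *ᵥ w with hu
  -- dot product as a continuous linear map
  let Lw : (Fin n ⊕ Fin n → ℝ) →ₗ[ℝ] ℝ :=
    { toFun := fun v => w ⬝ᵥ v
      map_add' := fun a b => by simp [dotProduct_add]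
      map_smul' := fun c a => by simp [dotProduct_smul] }
  let L : (Fin n ⊕ Fin n → ℝ) →L[ℝ] ℝ := LinearMap.toContinuousLinearMap Lw
  have hL : HasFDerivAt (fun v : Fin n ⊕ Fin n → ℝ => w ⬝ᵥ v) L x := L.hasFDerivAt
  have hα' : ContDiff ℝ ((1 : ℕ) + 1) α := by exact_mod_cast hα
  have hd : Differentiable ℝ (deriv α) :=
    (contDiff_succ_iff_deriv.mp hα').2.2.differentiable (by simp)
  set d : ℝ := deriv (deriv α) (w ⬝ᵥ x) with hdd
  have hda : HasDerivAt (deriv α) d (w ⬝ᵥ x) := (hd _).hasDerivAt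
  have comp : HasFDerivAt (fun y : Fin n ⊕ Fin n → ℝ => deriv α (w ⬝ᵥ y)) (d • L) x :=
    hda.comp_hasFDerivAt x hL
  have h1 : HasFDerivAt (fun y : Fin n ⊕ Fin n → ℝ => (h * deriv α (w ⬝ᵥ y)) • u)
      ((h • (d • L)).smulRight u) x := (comp.const_mul h).smul_const u
  have hφeq : φ = fun y => y + (h * deriv α (w ⬝ᵥ y)) • u := funext hφ
  have hD : HasFDerivAt φ (ContinuousLinearMap.id ℝ (Fin n ⊕ Fin n → ℝ)
      + (h • (d • L)).smulRight u) x := by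
    rw [hφeq]
    exact (hasFDerivAt_id x).add h1
  rw [hD.fderiv]
  have hM : LinearMap.toMatrix' (((ContinuousLinearMap.id ℝ (Fin n ⊕ Fin n → ℝ)
      + (h • (d • L)).smulRight u) : (Fin n ⊕ Fin n → ℝ) →L[ℝ] Fin n ⊕ Fin n → ℝ) :
        (Fin n ⊕ Fin n → ℝ) →ₗ[ℝ] Fin n ⊕ Fin n → ℝ)
      = 1 + (h * d) • vecMulVec u w := by
    ext i j
    rcases j with j | j <;>
      simp [LinearMap.toMatrix'_apply, vecMulVec_apply, L, Lw, Matrix.one_apply, Pi.single_apply,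
        dotProduct, Finset.sum_ite_eq, Finset.sum_ite_eq', mul_ite, mul_one, mul_zero,
        mul_comm, mul_assoc, mul_left_comm]
  rw [hM, hu]
  exact key_matrix w (h * d)
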